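/- Let B be a p-adic Banach algebra over ℚ_p (a unital ℚ_p-algebra complete with respect to a nonarchimedean submultiplicative norm with ‖1‖ = 1 and ‖λx‖ = |λ|_p ‖x‖) whose norm takes values in p^ℤ ∪ {0}, and let A = {b ∈ B : ‖b‖ ≤ 1}. If the residue algebra A/pA has no zero divisors, then every unit of B can be written uniquely as p^n · a with n ∈ ℤ and a ∈ A^*; in particular B^* = p^ℤ · A^* and p^ℤ ∩ A^* = {1}. -/
import Mathlib


/-- Let `B` be a `p`-adic Banach algebra over `ℚ_p` whose norm takes
values in `p^ℤ ∪ {0}`, and let `A = {b : ‖b‖ ≤ 1}` be its unit ball. If the residue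
algebra `A/pA` has no zero divisors (expressed: if a product of two elements of `A`
lies in `pA = {‖·‖ ≤ p⁻¹}` then one of the factors does), then every unit of `B` is
uniquely of the form `p^n • a` with `n : ℤ` and `a` a unit of `A` (i.e. a unit of `B`
such that both `a` and `a⁻¹` have norm `≤ 1`). In particular `B^* = p^ℤ·A^*` and
`p^ℤ ∩ A^* = 1`. -/
theorem stmt0 (p : ℕ) [Fact p.Prime] (B : Type*) [NormedRing B] [NormedAlgebra ℚ_[p] B]
    [CompleteSpace B] [NormOneClass B] [IsUltrametricDist B]
    (hval : ∀ x : B, x ≠ 0 → ∃ n : ℤ, ‖x‖ = (p : ℝ) ^ n)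
    (hnzd : ∀ x y : B, ‖x‖ ≤ 1 → ‖y‖ ≤ 1 → ‖x * y‖ ≤ (p : ℝ)⁻¹ →
      ‖x‖ ≤ (p : ℝ)⁻¹ ∨ ‖y‖ ≤ (p : ℝ)⁻¹) :
    ∀ b : Bˣ, ∃! z : ℤ × Bˣ,
      (‖((z.2 : Bˣ) : B)‖ ≤ 1 ∧ ‖((z.2⁻¹ : Bˣ) : B)‖ ≤ 1) ∧
      (b : B) = ((p : ℚ_[p]) ^ z.1) • ((z.2 : Bˣ) : B) := by
  have hp1 : (1:ℝ) < p := by exact_mod_cast (Fact.out : p.Prime).one_lt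
  have hp0 : (0:ℝ) < p := lt_trans one_pos hp1
  have hpQ : ((p:ℚ_[p])) ≠ 0 := by
    exact_mod_cast (Fact.out : p.Prime).ne_zero
  have hnormp : ‖(p:ℚ_[p])‖ = (p:ℝ)⁻¹ := Padic.norm_p
  have hnorm_zpow : ∀ k : ℤ, ‖(p:ℚ_[p])^k‖ = (p:ℝ)^(-k) := by
    intro k
    rw [norm_zpow, hnormp, ← zpow_neg_one, ← zpow_mul]
    ring_nf
  have hpinv : (p:ℝ)⁻¹ < 1 := inv_lt_one_of_one_lt₀ hp1
  have hone : (1:B) ≠ 0 := by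
    intro h
    have := norm_one (α := B)
    rw [h, norm_zero] at this
    exact zero_ne_one this
  have hune : ∀ u : Bˣ, (u:B) ≠ 0 := by
    intro u h
    apply hone
    rw [← u.mul_inv, h, zero_mul]
  -- key lemma: a unit of norm 1 has inverse of norm ≤ 1
  have key : ∀ u : Bˣ, ‖(u:B)‖ = 1 → ‖((u⁻¹:Bˣ):B)‖ ≤ 1 := by
    intro u hu
    obtain ⟨m, hm⟩ := hval ((u⁻¹:Bˣ):B) (hune _)
    rw [hm]
    by_contra h
    push_neg at h
    have hm1 : (1:ℤ) ≤ m := by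
      by_contra hm1
      push_neg at hm1
      exact absurd (zpow_le_one_of_nonpos₀ hp1.le (show m ≤ 0 by omega)) h.not_ge
    set y : B := ((p:ℚ_[p])^m) • ((u⁻¹:Bˣ):B) with hy
    have hyn : ‖y‖ = 1 := by
      rw [hy, norm_smul, hnorm_zpow, hm, ← zpow_add₀ (ne_of_gt hp0)]
      simp
    have hprod : ‖(u:B) * y‖ ≤ (p:ℝ)⁻¹ := by
      rw [hy, mul_smul_comm, u.mul_inv, norm_smul, norm_one, mul_one, hnorm_zpow,
        ← zpow_neg_one]
      exact zpow_le_zpow_right₀ hp1.le (by omega)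
    rcases hnzd _ _ hu.le hyn.le hprod with h' | h'
    · rw [hu] at h'; exact absurd (lt_of_le_of_lt h' hpinv) (lt_irrefl 1)
    · rw [hyn] at h'; exact absurd (lt_of_le_of_lt h' hpinv) (lt_irrefl 1)
  intro b
  obtain ⟨n, hn⟩ := hval (b:B) (hune b)
  -- the unit a = p^n • b has norm 1
  refine ⟨(-n, (Units.mk ((p:ℚ_[p])^n • (b:B)) ((p:ℚ_[p])^(-n) • ((b⁻¹:Bˣ):B))
      (by rw [smul_mul_smul_comm, ← zpow_add₀ hpQ, b.mul_inv]; simp)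
      (by rw [smul_mul_smul_comm, ← zpow_add₀ hpQ, b.inv_mul]; simp))), ?_, ?_⟩
  · have ha : ‖(p:ℚ_[p])^n • (b:B)‖ = 1 := by
      rw [norm_smul, hnorm_zpow, hn, ← zpow_add₀ (ne_of_gt hp0)]
      simp
    refine ⟨⟨ha.le, key _ ha⟩, ?_⟩
    show (b:B) = (p:ℚ_[p])^(-n) • ((p:ℚ_[p])^n • (b:B))
    rw [smul_smul, ← zpow_add₀ hpQ]
    simp
  · rintro ⟨m, c⟩ ⟨⟨hc1, hc2⟩, hbc⟩
    have hcn : ‖(c:B)‖ = 1 := by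
      have h1 : (1:ℝ) ≤ ‖(c:B)‖ * ‖((c⁻¹:Bˣ):B)‖ := by
        calc (1:ℝ) = ‖(1:B)‖ := norm_one.symm
        _ = ‖(c:B) * ((c⁻¹:Bˣ):B)‖ := by rw [c.mul_inv]
        _ ≤ _ := norm_mul_le _ _
      have h2 : ‖(c:B)‖ * ‖((c⁻¹:Bˣ):B)‖ ≤ ‖(c:B)‖ * 1 :=
        mul_le_mul_of_nonneg_left hc2 (norm_nonneg _)
      rw [mul_one] at h2
      exact le_antisymm hc1 (le_trans h1 h2)
    have hbn : ‖(b:B)‖ = (p:ℝ)^(-m) := by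
      rw [hbc, norm_smul, hnorm_zpow, hcn, mul_one]
    have hmn : m = -n := by
      have : (p:ℝ)^(n:ℤ) = (p:ℝ)^(-m) := by rw [← hn, hbn]
      have := zpow_right_injective₀ hp0 hp1.ne' this
      omega
    subst hmn
    have hcb : (c:B) = (p:ℚ_[p])^n • (b:B) := by
      have := hbc
      rw [show (((-n, c) : ℤ × Bˣ).1) = -n from rfl] at this
      calc (c:B) = (p:ℚ_[p])^n • ((p:ℚ_[p])^(-n) • (c:B)) := by
            rw [smul_smul, ← zpow_add₀ hpQ]; simp
      _ = (p:ℚ_[p])^n • (b:B) := by rw [← hbc]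
    refine Prod.ext rfl (Units.ext ?_)
    exact hcb
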